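/- Let A be a 5×5 additive-multiplicative magic square of distinct positive integers with magic product P, and suppose its center entry C (the entry in position (3,3)) satisfies P/C = p^s·q^2 for distinct primes p and q and a positive integer s. Then p = 2 or p = 3. -/

import Mathlib

/-- `A` is an `n × n` additive-multiplicative magic square of pairwise distinct
positive integers, with magic sum `S` and magic product `P`: every row, every
column, and both long diagonals have sum `S` and product `P`. -/
def IsAddMulMagicSquare (n : ℕ) (A : Fin n → Fin n → ℕ) (S P : ℕ) : Prop :=
  (∀ i j, 0 < A i j) ∧
  (Function.Injective fun c : Fin n × Fin n => A c.1 c.2) ∧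
  (∀ i, ∑ j, A i j = S) ∧
  (∀ j, ∑ i, A i j = S) ∧
  (∑ i, A i i = S) ∧
  (∑ i, A i i.rev = S) ∧
  (∀ i, ∏ j, A i j = P) ∧
  (∀ j, ∏ i, A i j = P) ∧
  (∏ i, A i i = P) ∧
  (∏ i, A i i.rev = P)

/-- The cells of the four center-free "lines" through the center of a 5×5 square:
row 2, column 2, main diagonal, antidiagonal (center removed). -/
def qcell : Fin 4 → Fin 4 → Fin 5 × Fin 5 :=
  ![![(2,0),(2,1),(2,3),(2,4)],
    ![(0,2),(1,2),(3,2),(4,2)],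
    ![(0,0),(1,1),(3,3),(4,4)],
    ![(0,4),(1,3),(3,1),(4,0)]]

lemma qcell_inj : ∀ i j i' j', qcell i j = qcell i' j' → i = i' ∧ j = j' := by decide

lemma div_pq {p q s x : ℕ} (hp : p.Prime) (hq : q.Prime)
    (h : x ∣ p ^ s * q ^ 2) : ∃ a b, b ≤ 2 ∧ x = p ^ a * q ^ b := by
  obtain ⟨u, v, hu, hv, huv⟩ := (Nat.dvd_mul).mp h
  obtain ⟨a, _, rfl⟩ := (Nat.dvd_prime_pow hp).mp hu
  obtain ⟨b, hb, rfl⟩ := (Nat.dvd_prime_pow hq).mp hv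
  exact ⟨a, b, hb, huv.symm⟩

lemma key_lemma {p q s T : ℕ} (hp : p.Prime) (hq : q.Prime) (hp5 : 5 ≤ p)
    (x : Fin 4 → Fin 4 → ℕ)
    (hpos : ∀ i j, 0 < x i j)
    (hne : ∀ i j i' j', x i j = x i' j' → i = i')
    (hsum : ∀ i, x i 0 + x i 1 + x i 2 + x i 3 = T)
    (hprod : ∀ i, x i 0 * x i 1 * x i 2 * x i 3 = p ^ s * q ^ 2) : False := by
  classical
  set m : Fin 4 → ℕ := fun i => max (max (x i 0) (x i 1)) (max (x i 2) (x i 3)) with hm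
  have hmem : ∀ i, m i = x i 0 ∨ m i = x i 1 ∨ m i = x i 2 ∨ m i = x i 3 := by
    intro i
    rcases max_choice (max (x i 0) (x i 1)) (max (x i 2) (x i 3)) with h | h
    · rcases max_choice (x i 0) (x i 1) with h2 | h2
      · exact Or.inl (by exact h.trans h2)
      · exact Or.inr (Or.inl (by exact h.trans h2))
    · rcases max_choice (x i 2) (x i 3) with h2 | h2
      · exact Or.inr (Or.inr (Or.inl (by exact h.trans h2)))
      · exact Or.inr (Or.inr (Or.inr (by exact h.trans h2)))
  have hle : ∀ i, x i 0 ≤ m i ∧ x i 1 ≤ m i ∧ x i 2 ≤ m i ∧ x i 3 ≤ m i := by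
    intro i
    refine ⟨le_trans (le_max_left _ _) (le_max_left _ _),
      le_trans (le_max_right _ _) (le_max_left _ _),
      le_trans (le_max_left _ _) (le_max_right _ _),
      le_trans (le_max_right _ _) (le_max_right _ _)⟩
  have hbound : ∀ i, m i < T ∧ T ≤ 4 * m i ∧ 0 < m i := by
    intro i
    have h0 := hpos i 0; have h1 := hpos i 1; have h2 := hpos i 2; have h3 := hpos i 3
    have hl := hle i
    have hs := hsum i
    rcases hmem i with h | h | h | h <;> omega
  have hdvd : ∀ i, m i ∣ p ^ s * q ^ 2 := by
    intro i
    rcases hmem i with h | h | h | h <;> rw [h]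
    · exact ⟨x i 1 * x i 2 * x i 3, by rw [← hprod i]; ring⟩
    · exact ⟨x i 0 * x i 2 * x i 3, by rw [← hprod i]; ring⟩
    · exact ⟨x i 0 * x i 1 * x i 3, by rw [← hprod i]; ring⟩
    · exact ⟨x i 0 * x i 1 * x i 2, by rw [← hprod i]; ring⟩
  choose a b hb2 hfact using fun i => div_pq hp hq (hdvd i)
  have hmaps : ∀ i ∈ (Finset.univ : Finset (Fin 4)), b i ∈ ({0, 1, 2} : Finset ℕ) := by
    intro i _
    have := hb2 i
    simp only [Finset.mem_insert, Finset.mem_singleton]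
    omega
  obtain ⟨i, -, i', -, hii', hbeq⟩ :=
    Finset.exists_ne_map_eq_of_card_lt_of_maps_to (by simp) hmaps
  have hmne : m i ≠ m i' := by
    intro h
    rcases hmem i with h1 | h1 | h1 | h1 <;> rcases hmem i' with h2 | h2 | h2 | h2 <;>
      exact hii' (hne _ _ _ _ (h1.symm.trans (h.trans h2)))
  have haux : ∀ u v : Fin 4, b u = b v → a v < a u → 5 * m v ≤ m u := by
    intro u v hbv hav
    have hpowsplit : p ^ a u = p ^ (a u - a v) * p ^ a v := by
      rw [← pow_add]; congr 1; omega
    have h5 : 5 ≤ p ^ (a u - a v) :=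
      le_trans hp5 (Nat.le_self_pow (by omega) p)
    calc 5 * m v ≤ p ^ (a u - a v) * m v := mul_le_mul_left h5 (m v)
      _ = m u := by rw [hfact v, hfact u, hpowsplit, hbv]; ring
  have hane : a i ≠ a i' := by
    intro h
    exact hmne (by rw [hfact i, hfact i', h, hbeq])
  have b1 := hbound i
  have b2 := hbound i'
  rcases Nat.lt_or_ge (a i) (a i') with hlt | hge
  · have := haux i' i hbeq.symm hlt
    omega
  · have hgt : a i' < a i := lt_of_le_of_ne hge (Ne.symm hane)
    have := haux i i' hbeq hgt
    omega

/-- If the center entry `C` of a 5×5 additive-multiplicative magic square of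
distinct positive integers satisfies `P / C = p^s * q^2` for distinct primes
`p, q` and `s ≥ 1`, then `p = 2` or `p = 3`. -/
theorem center_prime_power_times_prime_sq_forces_two_or_three
    (A : Fin 5 → Fin 5 → ℕ) (S P : ℕ)
    (hA : IsAddMulMagicSquare 5 A S P)
    (p q s : ℕ) (hp : p.Prime) (hq : q.Prime) (hpq : p ≠ q) (hs : 1 ≤ s)
    (hPC : P = A 2 2 * (p ^ s * q ^ 2)) :
    p = 2 ∨ p = 3 := by
  obtain ⟨hpos, hinj, hrow, hcol, hdiag, hadiag, hprow, hpcol, hpdiag, hpadiag⟩ := hA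
  by_contra hcon
  push_neg at hcon
  obtain ⟨hp2, hp3⟩ := hcon
  have hp5 : 5 ≤ p := by
    have h2 := hp.two_le
    have h4 : p ≠ 4 := by rintro rfl; norm_num at hp
    omega
  have hAinj : ∀ a b c d : Fin 5, A a b = A c d → a = c ∧ b = d := by
    intro a b c d h
    have := hinj (a₁ := (a, b)) (a₂ := (c, d)) h
    exact ⟨congrArg Prod.fst this, congrArg Prod.snd this⟩
  have hr := hrow 2
  have hc := hcol 2
  have hd := hdiag
  have he := hadiag
  simp only [Fin.sum_univ_five] at hr hc hd he
  have e0 : (Fin.rev 0 : Fin 5) = 4 := by decide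
  have e1 : (Fin.rev 1 : Fin 5) = 3 := by decide
  have e2 : (Fin.rev 2 : Fin 5) = 2 := by decide
  have e3 : (Fin.rev 3 : Fin 5) = 1 := by decide
  have e4 : (Fin.rev 4 : Fin 5) = 0 := by decide
  rw [e0, e1, e2, e3, e4] at he
  have pr := hprow 2
  have pc := hpcol 2
  have pd := hpdiag
  have pe := hpadiag
  simp only [Fin.prod_univ_five] at pr pc pd pe
  rw [e0, e1, e2, e3, e4] at pe
  have hCpos := hpos 2 2
  have mr : A 2 0 * A 2 1 * A 2 3 * A 2 4 = p ^ s * q ^ 2 := by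
    have h : A 2 2 * (A 2 0 * A 2 1 * A 2 3 * A 2 4) = A 2 2 * (p ^ s * q ^ 2) := by
      rw [← hPC, ← pr]; ring
    exact Nat.eq_of_mul_eq_mul_left hCpos h
  have mc : A 0 2 * A 1 2 * A 3 2 * A 4 2 = p ^ s * q ^ 2 := by
    have h : A 2 2 * (A 0 2 * A 1 2 * A 3 2 * A 4 2) = A 2 2 * (p ^ s * q ^ 2) := by
      rw [← hPC, ← pc]; ring
    exact Nat.eq_of_mul_eq_mul_left hCpos h
  have md : A 0 0 * A 1 1 * A 3 3 * A 4 4 = p ^ s * q ^ 2 := by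
    have h : A 2 2 * (A 0 0 * A 1 1 * A 3 3 * A 4 4) = A 2 2 * (p ^ s * q ^ 2) := by
      rw [← hPC, ← pd]; ring
    exact Nat.eq_of_mul_eq_mul_left hCpos h
  have me : A 0 4 * A 1 3 * A 3 1 * A 4 0 = p ^ s * q ^ 2 := by
    have h : A 2 2 * (A 0 4 * A 1 3 * A 3 1 * A 4 0) = A 2 2 * (p ^ s * q ^ 2) := by
      rw [← hPC, ← pe]; ring
    exact Nat.eq_of_mul_eq_mul_left hCpos h
  set T := A 2 0 + A 2 1 + A 2 3 + A 2 4 with hT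
  have sr : A 2 0 + A 2 1 + A 2 3 + A 2 4 = T := rfl
  have sc : A 0 2 + A 1 2 + A 3 2 + A 4 2 = T := by omega
  have sd : A 0 0 + A 1 1 + A 3 3 + A 4 4 = T := by omega
  have se : A 0 4 + A 1 3 + A 3 1 + A 4 0 = T := by omega
  have hxne : ∀ i j i' j',
      A (qcell i j).1 (qcell i j).2 = A (qcell i' j').1 (qcell i' j').2 → i = i' := by
    intro i j i' j' h
    obtain ⟨h1, h2⟩ := hAinj _ _ _ _ h
    exact (qcell_inj i j i' j' (Prod.ext h1 h2)).1
  have hxsum : ∀ i : Fin 4,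
      A (qcell i 0).1 (qcell i 0).2 + A (qcell i 1).1 (qcell i 1).2 +
      A (qcell i 2).1 (qcell i 2).2 + A (qcell i 3).1 (qcell i 3).2 = T := by
    intro i
    fin_cases i
    · exact sr
    · exact sc
    · exact sd
    · exact se
  have hxprod : ∀ i : Fin 4,
      A (qcell i 0).1 (qcell i 0).2 * A (qcell i 1).1 (qcell i 1).2 *
      A (qcell i 2).1 (qcell i 2).2 * A (qcell i 3).1 (qcell i 3).2 = p ^ s * q ^ 2 := by
    intro i
    fin_cases i
    · exact mr
    · exact mc
    · exact md
    · exact me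
  exact key_lemma hp hq hp5 (fun i j => A (qcell i j).1 (qcell i j).2)
    (fun i j => hpos _ _) hxne hxsum hxprod
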